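/- Let F be a group generated by a finite set X, and let R be a normal subgroup of F that is the normal closure of a finite set T. Then the subgroup [F,R] generated by all commutators [f,r] with f ∈ F and r ∈ R equals the normal closure in F of the finite set {[x,t] : x ∈ X, t ∈ T}. -/

import Mathlib

open scoped commutatorElement

/-- Let `F` be a group generated by a finite set `X` and `R` a normal subgroup of `F`
which is the normal closure of a finite set `T`. Then the subgroup `[F,R]` generated
by all commutators `[f,r]` with `f ∈ F`, `r ∈ R` equals the normal closure of the
finite set `{[x,t] : x ∈ X, t ∈ T}`. -/
theorem commutator_top_eq_normalClosure (F : Type*) [Group F] (X T : Finset F)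
    (hX : Subgroup.closure (X : Set F) = ⊤)
    (R : Subgroup F) (hR : R.Normal)
    (hT : Subgroup.normalClosure (T : Set F) = R) :
    ⁅(⊤ : Subgroup F), R⁆
      = Subgroup.normalClosure ((fun p : F × F => ⁅p.1, p.2⁆) '' ((X : Set F) ×ˢ (T : Set F))) := by
  haveI := hR
  set S : Set F := (fun p : F × F => ⁅p.1, p.2⁆) '' ((X : Set F) ×ˢ (T : Set F)) with hS
  set N := Subgroup.normalClosure S with hN
  apply le_antisymm
  · -- ⁅⊤,R⁆ ≤ N
    let π := QuotientGroup.mk' N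
    have hπs : Function.Surjective π := QuotientGroup.mk'_surjective N
    have hgen : Subgroup.closure (π '' (X : Set F)) = ⊤ := by
      rw [← MonoidHom.map_closure, hX, ← MonoidHom.range_eq_map,
        MonoidHom.range_eq_top_of_surjective π hπs]
    have hTc : ∀ t ∈ (T : Set F), π t ∈ Subgroup.center (F ⧸ N) := by
      intro t ht
      rw [Subgroup.mem_center_iff]
      intro g
      have hg : g ∈ Subgroup.closure (π '' (X : Set F)) := hgen ▸ Subgroup.mem_top g
      induction hg using Subgroup.closure_induction with
      | mem y hy =>
        obtain ⟨x, hx, rfl⟩ := hy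
        have hmem : ⁅x, t⁆ ∈ N :=
          Subgroup.subset_normalClosure ⟨(x, t), ⟨hx, ht⟩, rfl⟩
        have h1 : π ⁅x, t⁆ = 1 := (QuotientGroup.eq_one_iff _).mpr hmem
        rw [map_commutatorElement] at h1
        exact commutatorElement_eq_one_iff_mul_comm.mp h1
      | one => simp
      | mul a b _ _ ha hb => rw [mul_assoc, hb, ← mul_assoc, ha, mul_assoc]
      | inv a _ ha =>
        have := congrArg (fun z => a⁻¹ * z * a⁻¹) ha.symm
        simpa [mul_assoc] using this
    have hRc : R ≤ (Subgroup.center (F ⧸ N)).comap π := by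
      rw [← hT]
      exact Subgroup.normalClosure_le_normal hTc
    rw [Subgroup.commutator_le]
    intro g _ r hr
    have hc : π r ∈ Subgroup.center (F ⧸ N) := hRc hr
    have : π ⁅g, r⁆ = 1 := by
      rw [map_commutatorElement]
      exact commutatorElement_eq_one_iff_mul_comm.mpr
        (Subgroup.mem_center_iff.mp hc (π g))
    exact (QuotientGroup.eq_one_iff _).mp this
  · apply Subgroup.normalClosure_le_normal
    rintro _ ⟨⟨x, t⟩, ⟨hx, ht⟩, rfl⟩
    exact Subgroup.commutator_mem_commutator (Subgroup.mem_top x)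
      (hT ▸ Subgroup.subset_normalClosure ht)
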